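/- Let μ ∈ ℝ, σ > 0 and β ≥ 0. Then the (2,2) entry of the matrix K_β(μ,σ) = ∫₀^∞ u uᵀ f_{μ,σ}^{1+2β} dx − ξ ξᵀ (where ξ = ∫₀^∞ u f_{μ,σ}^{1+β} dx) satisfies ∫₀^∞ u₂(x)² f_{μ,σ}(x)^{1+2β} dx − ( ∫₀^∞ u₂(x) f_{μ,σ}(x)^{1+β} dx )² = (L*(β,μ,σ)/σ) · ( 16β⁴σ⁴/(1+2β)² + 24σ²β²/(1+2β) + 4β²(1 − 2σ²) + 2 ) − L**(β,μ,σ) · β²(βσ² − β − 1)²/(1+β)². -/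

import Mathlib

open Real MeasureTheory Set

/-- The log-normal density with parameters `μ` and `σ`. -/
noncomputable def lognormalPdf (μ σ : ℝ) (x : ℝ) : ℝ :=
  if 0 < x then
    (1 / (x * σ * Real.sqrt (2 * Real.pi))) * Real.exp (-(Real.log x - μ) ^ 2 / (2 * σ ^ 2))
  else 0

/-- First component of the score function of the log-normal model. -/
noncomputable def scoreU1 (μ σ : ℝ) (x : ℝ) : ℝ := (Real.log x - μ) / σ ^ 2

/-- Second component of the score function of the log-normal model. -/
noncomputable def scoreU2 (μ σ : ℝ) (x : ℝ) : ℝ := ((Real.log x - μ) ^ 2 - σ ^ 2) / σ ^ 3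

/-- The factor `L*(β, μ, σ)`. -/
noncomputable def Lstar (β μ σ : ℝ) : ℝ :=
  Real.exp (-2 * β * μ + 2 * β ^ 2 * σ ^ 2 / (1 + 2 * β)) /
    (σ ^ (2 * β + 1) * (2 * Real.pi) ^ β * (1 + 2 * β) ^ ((5 : ℝ) / 2))

/-- The factor `L**(β, μ, σ)`. -/
noncomputable def Lstarstar (β μ σ : ℝ) : ℝ :=
  Real.exp (-2 * β * μ + β ^ 2 * σ ^ 2 / (1 + β)) /
    (σ ^ (2 * β + 2) * (2 * Real.pi) ^ β * (1 + β) ^ 3)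


lemma integrable_pow_gauss {a : ℝ} (ha : 0 < a) (k : ℕ) :
    Integrable fun x : ℝ => x ^ k * Real.exp (-a * x ^ 2) := by
  have h := integrable_rpow_mul_exp_neg_mul_sq ha (s := (k : ℝ))
    (lt_of_lt_of_le (by norm_num) (Nat.cast_nonneg k))
  simpa [Real.rpow_natCast] using h

lemma gauss_odd (a : ℝ) {k : ℕ} (hk : Odd k) :
    ∫ x : ℝ, x ^ k * Real.exp (-a * x ^ 2) = 0 := by
  have h : ∫ x : ℝ, (fun x : ℝ => x ^ k * Real.exp (-a * x ^ 2)) (-x)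
      = ∫ x : ℝ, x ^ k * Real.exp (-a * x ^ 2) :=
    integral_neg_eq_self (fun x : ℝ => x ^ k * Real.exp (-a * x ^ 2)) volume
  have h2 : ∫ x : ℝ, (fun x : ℝ => x ^ k * Real.exp (-a * x ^ 2)) (-x)
      = - ∫ x : ℝ, x ^ k * Real.exp (-a * x ^ 2) := by
    rw [← integral_neg]
    congr 1; funext x
    simp only [hk.neg_pow, neg_sq]; ring
  rw [h2] at h
  linarith

lemma gauss_Ioi (a : ℝ) (ha : 0 < a) (k : ℕ) :
    ∫ x in Ioi (0 : ℝ), x ^ k * Real.exp (-a * x ^ 2)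
      = (1 / a) ^ (((k : ℝ) + 1) / 2) * Real.Gamma (((k : ℝ) + 1) / 2) / 2 := by
  have hs : (0 : ℝ) < ((k : ℝ) + 1) / 2 := by positivity
  have key := integral_comp_rpow_Ioi_of_pos
    (g := fun t : ℝ => t ^ (((k : ℝ) + 1) / 2 - 1) * Real.exp (-(a * t))) (p := 2) zero_lt_two
  rw [integral_rpow_mul_exp_neg_mul_Ioi hs ha] at key
  have hcong : ∀ x ∈ Ioi (0 : ℝ),
      (2 * x ^ ((2 : ℝ) - 1)) • ((x ^ (2 : ℝ)) ^ (((k : ℝ) + 1) / 2 - 1)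
        * Real.exp (-(a * x ^ (2 : ℝ))))
      = 2 * (x ^ k * Real.exp (-a * x ^ 2)) := by
    intro x hx
    have hx0 : (0 : ℝ) < x := hx
    have e1 : x ^ ((2 : ℝ) - 1) = x := by norm_num
    have e2 : (x ^ (2 : ℝ)) ^ (((k : ℝ) + 1) / 2 - 1) = x ^ ((k : ℝ) - 1) := by
      rw [← Real.rpow_mul hx0.le]; congr 1; ring
    have e3 : x * x ^ ((k : ℝ) - 1) = x ^ k := by
      calc x * x ^ ((k : ℝ) - 1) = x ^ (1 : ℝ) * x ^ ((k : ℝ) - 1) := by rw [Real.rpow_one]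
        _ = x ^ ((1 : ℝ) + ((k : ℝ) - 1)) := (Real.rpow_add hx0 _ _).symm
        _ = x ^ ((k : ℝ)) := by ring_nf
        _ = x ^ k := Real.rpow_natCast x k
    rw [smul_eq_mul, e1, e2, Real.rpow_two]
    calc 2 * x * (x ^ ((k : ℝ) - 1) * Real.exp (-(a * x ^ 2)))
        = 2 * ((x * x ^ ((k : ℝ) - 1)) * Real.exp (-a * x ^ 2)) := by ring_nf
      _ = 2 * (x ^ k * Real.exp (-a * x ^ 2)) := by rw [e3]
  rw [setIntegral_congr_fun measurableSet_Ioi hcong, integral_const_mul] at key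
  linarith

lemma gauss_even (a : ℝ) (ha : 0 < a) {k : ℕ} (hk : Even k) :
    ∫ x : ℝ, x ^ k * Real.exp (-a * x ^ 2)
      = (1 / a) ^ (((k : ℝ) + 1) / 2) * Real.Gamma (((k : ℝ) + 1) / 2) := by
  have h : ∀ x : ℝ, x ^ k * Real.exp (-a * x ^ 2)
      = (fun t : ℝ => t ^ k * Real.exp (-a * t ^ 2)) |x| := by
    intro x
    simp only [hk.pow_abs, sq_abs]
  calc ∫ x : ℝ, x ^ k * Real.exp (-a * x ^ 2)
      = ∫ x : ℝ, (fun t : ℝ => t ^ k * Real.exp (-a * t ^ 2)) |x| := by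
        congr 1; funext x; exact h x
    _ = 2 * ∫ x in Ioi (0 : ℝ), x ^ k * Real.exp (-a * x ^ 2) := integral_comp_abs (f := fun t : ℝ => t ^ k * Real.exp (-a * t ^ 2))
    _ = _ := by rw [gauss_Ioi a ha k]; ring

lemma gauss_M0 (a : ℝ) (ha : 0 < a) :
    ∫ x : ℝ, x ^ 0 * Real.exp (-a * x ^ 2) = Real.sqrt π / Real.sqrt a := by
  rw [gauss_even a ha Even.zero]
  have h : (((0 : ℕ) : ℝ) + 1) / 2 = 1 / 2 := by norm_num
  rw [h, Real.Gamma_one_half_eq, ← Real.sqrt_eq_rpow, one_div, Real.sqrt_inv]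
  ring

lemma gauss_M2 (a : ℝ) (ha : 0 < a) :
    ∫ x : ℝ, x ^ 2 * Real.exp (-a * x ^ 2) = Real.sqrt π / (2 * a * Real.sqrt a) := by
  rw [gauss_even a ha (⟨1, rfl⟩ : Even 2)]
  have h : (((2 : ℕ) : ℝ) + 1) / 2 = 1 / 2 + 1 := by norm_num
  rw [h, Real.Gamma_add_one (by norm_num), Real.Gamma_one_half_eq,
    Real.rpow_add (by positivity), Real.rpow_one, ← Real.sqrt_eq_rpow, one_div,
    Real.sqrt_inv]
  ring

lemma gauss_M4 (a : ℝ) (ha : 0 < a) :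
    ∫ x : ℝ, x ^ 4 * Real.exp (-a * x ^ 2)
      = 3 * Real.sqrt π / (4 * a ^ 2 * Real.sqrt a) := by
  rw [gauss_even a ha (⟨2, rfl⟩ : Even 4)]
  have h : (((4 : ℕ) : ℝ) + 1) / 2 = 1 / 2 + 1 + 1 := by norm_num
  rw [h, Real.Gamma_add_one (by norm_num), Real.Gamma_add_one (by norm_num),
    Real.Gamma_one_half_eq, Real.rpow_add (by positivity), Real.rpow_add (by positivity),
    Real.rpow_one, ← Real.sqrt_eq_rpow, one_div, Real.sqrt_inv]
  ring

lemma gauss_poly (a c0 c1 c2 c3 c4 : ℝ) (ha : 0 < a) :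
    ∫ s : ℝ, (c0 + c1 * s + c2 * s ^ 2 + c3 * s ^ 3 + c4 * s ^ 4) * Real.exp (-a * s ^ 2)
      = Real.sqrt π / Real.sqrt a * (c0 + c2 / (2 * a) + 3 * c4 / (4 * a ^ 2)) := by
  have I : ∀ k : ℕ, Integrable fun x : ℝ => x ^ k * Real.exp (-a * x ^ 2) :=
    integrable_pow_gauss ha
  have expand : (fun s : ℝ =>
      (c0 + c1 * s + c2 * s ^ 2 + c3 * s ^ 3 + c4 * s ^ 4) * Real.exp (-a * s ^ 2))
      = fun s : ℝ => c0 * (s ^ 0 * Real.exp (-a * s ^ 2)) +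
        (c1 * (s ^ 1 * Real.exp (-a * s ^ 2)) + (c2 * (s ^ 2 * Real.exp (-a * s ^ 2)) +
          (c3 * (s ^ 3 * Real.exp (-a * s ^ 2)) + c4 * (s ^ 4 * Real.exp (-a * s ^ 2))))) := by
    funext s; ring
  have J34 : Integrable (fun s : ℝ => c3 * (s ^ 3 * Real.exp (-a * s ^ 2)) +
      c4 * (s ^ 4 * Real.exp (-a * s ^ 2))) := ((I 3).const_mul c3).add ((I 4).const_mul c4)
  have J234 : Integrable (fun s : ℝ => c2 * (s ^ 2 * Real.exp (-a * s ^ 2)) +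
      (c3 * (s ^ 3 * Real.exp (-a * s ^ 2)) + c4 * (s ^ 4 * Real.exp (-a * s ^ 2)))) :=
    ((I 2).const_mul c2).add J34
  have J1234 : Integrable (fun s : ℝ => c1 * (s ^ 1 * Real.exp (-a * s ^ 2)) +
      (c2 * (s ^ 2 * Real.exp (-a * s ^ 2)) + (c3 * (s ^ 3 * Real.exp (-a * s ^ 2)) +
        c4 * (s ^ 4 * Real.exp (-a * s ^ 2))))) := ((I 1).const_mul c1).add J234
  rw [expand,
    integral_add ((I 0).const_mul c0) J1234,
    integral_add ((I 1).const_mul c1) J234,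
    integral_add ((I 2).const_mul c2) J34,
    integral_add ((I 3).const_mul c3) ((I 4).const_mul c4),
    integral_const_mul, integral_const_mul, integral_const_mul, integral_const_mul,
    integral_const_mul, gauss_M0 a ha, gauss_odd a (⟨0, rfl⟩ : Odd 1), gauss_M2 a ha,
    gauss_odd a (⟨1, rfl⟩ : Odd 3), gauss_M4 a ha]
  have h1 : Real.sqrt a ≠ 0 := by positivity
  field_simp
  ring

lemma gauss_shift (a b d0 d1 d2 d3 d4 : ℝ) (ha : 0 < a) :
    ∫ t : ℝ, (d0 + d1 * t + d2 * t ^ 2 + d3 * t ^ 3 + d4 * t ^ 4) * Real.exp (b * t - a * t ^ 2)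
      = Real.exp (b ^ 2 / (4 * a)) * (Real.sqrt π / Real.sqrt a) *
        ((d0 + d1 * (b / (2 * a)) + d2 * (b / (2 * a)) ^ 2 + d3 * (b / (2 * a)) ^ 3 +
            d4 * (b / (2 * a)) ^ 4) +
          (d2 + 3 * d3 * (b / (2 * a)) + 6 * d4 * (b / (2 * a)) ^ 2) / (2 * a) +
          3 * d4 / (4 * a ^ 2)) := by
  set m := b / (2 * a) with hm
  have key : ∀ t : ℝ,
      (d0 + d1 * t + d2 * t ^ 2 + d3 * t ^ 3 + d4 * t ^ 4) * Real.exp (b * t - a * t ^ 2)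
      = Real.exp (b ^ 2 / (4 * a)) * ((fun s : ℝ =>
          (d0 + d1 * (s + m) + d2 * (s + m) ^ 2 + d3 * (s + m) ^ 3 + d4 * (s + m) ^ 4) *
            Real.exp (-a * s ^ 2)) (t - m)) := by
    intro t
    have harg : b * t - a * t ^ 2 = b ^ 2 / (4 * a) + -a * (t - m) ^ 2 := by
      rw [hm]; field_simp; ring
    simp only
    rw [harg, Real.exp_add]
    ring
  simp only [key]
  rw [integral_const_mul, integral_sub_right_eq_self (fun s : ℝ =>
    (d0 + d1 * (s + m) + d2 * (s + m) ^ 2 + d3 * (s + m) ^ 3 + d4 * (s + m) ^ 4) *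
      Real.exp (-a * s ^ 2)) m]
  have expand : (fun s : ℝ =>
      (d0 + d1 * (s + m) + d2 * (s + m) ^ 2 + d3 * (s + m) ^ 3 + d4 * (s + m) ^ 4) *
        Real.exp (-a * s ^ 2))
      = fun s : ℝ => ((d0 + d1 * m + d2 * m ^ 2 + d3 * m ^ 3 + d4 * m ^ 4) +
          (d1 + 2 * d2 * m + 3 * d3 * m ^ 2 + 4 * d4 * m ^ 3) * s +
          (d2 + 3 * d3 * m + 6 * d4 * m ^ 2) * s ^ 2 +
          (d3 + 4 * d4 * m) * s ^ 3 + d4 * s ^ 4) * Real.exp (-a * s ^ 2) := by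
    funext s; ring
  rw [expand, gauss_poly _ _ _ _ _ _ ha]
  ring

lemma integral_Ioi_comp_exp (g : ℝ → ℝ) :
    ∫ x in Ioi (0 : ℝ), g x = ∫ y : ℝ, Real.exp y * g (Real.exp y) := by
  have h := integral_image_eq_integral_abs_deriv_smul (s := (Set.univ : Set ℝ))
    (f := Real.exp) (f' := Real.exp) MeasurableSet.univ
    (fun x _ => (Real.hasDerivAt_exp x).hasDerivWithinAt) (Real.exp_injective.injOn) g
  rw [Set.image_univ, Real.range_exp] at h
  simpa [abs_of_pos (Real.exp_pos _)] using h

lemma lognormal_int (μ σ p d0 d1 d2 d3 d4 : ℝ) (hσ : 0 < σ) (hp : 0 < p) :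
    ∫ x in Ioi (0 : ℝ), (d0 + d1 * (Real.log x - μ) + d2 * (Real.log x - μ) ^ 2 +
        d3 * (Real.log x - μ) ^ 3 + d4 * (Real.log x - μ) ^ 4) * lognormalPdf μ σ x ^ p
      = Real.exp ((1 - p) * μ) / (σ * Real.sqrt (2 * π)) ^ p *
        ∫ t : ℝ, (d0 + d1 * t + d2 * t ^ 2 + d3 * t ^ 3 + d4 * t ^ 4) *
          Real.exp ((1 - p) * t - p / (2 * σ ^ 2) * t ^ 2) := by
  rw [integral_Ioi_comp_exp]
  have hc : (0 : ℝ) < σ * Real.sqrt (2 * π) := by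
    have := Real.two_pi_pos
    positivity
  have key : ∀ y : ℝ, Real.exp y * ((d0 + d1 * (Real.log (Real.exp y) - μ) +
        d2 * (Real.log (Real.exp y) - μ) ^ 2 + d3 * (Real.log (Real.exp y) - μ) ^ 3 +
        d4 * (Real.log (Real.exp y) - μ) ^ 4) * lognormalPdf μ σ (Real.exp y) ^ p)
      = Real.exp ((1 - p) * μ) / (σ * Real.sqrt (2 * π)) ^ p *
        ((fun t : ℝ => (d0 + d1 * t + d2 * t ^ 2 + d3 * t ^ 3 + d4 * t ^ 4) *
          Real.exp ((1 - p) * t - p / (2 * σ ^ 2) * t ^ 2)) (y - μ)) := by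
    intro y
    have hpdf : lognormalPdf μ σ (Real.exp y)
        = Real.exp (-y + -((y - μ) ^ 2 / (2 * σ ^ 2))) / (σ * Real.sqrt (2 * π)) := by
      rw [lognormalPdf, if_pos (Real.exp_pos y), Real.log_exp, Real.exp_add, Real.exp_neg]
      rw [neg_div, Real.exp_neg]
      field_simp
    rw [Real.log_exp, hpdf, Real.div_rpow (Real.exp_pos _).le hc.le,
      Real.rpow_def_of_pos (Real.exp_pos _), Real.log_exp]
    simp only
    have e1 : Real.exp y * Real.exp ((-y + -((y - μ) ^ 2 / (2 * σ ^ 2))) * p)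
        = Real.exp ((1 - p) * μ) *
          Real.exp ((1 - p) * (y - μ) - p / (2 * σ ^ 2) * (y - μ) ^ 2) := by
      rw [← Real.exp_add, ← Real.exp_add]
      congr 1
      field_simp
      ring
    linear_combination ((d0 + d1 * (y - μ) + d2 * (y - μ) ^ 2 + d3 * (y - μ) ^ 3 +
      d4 * (y - μ) ^ 4) / (σ * Real.sqrt (2 * π)) ^ p) * e1
  simp only [key]
  rw [integral_const_mul, integral_sub_right_eq_self (fun t : ℝ =>
    (d0 + d1 * t + d2 * t ^ 2 + d3 * t ^ 3 + d4 * t ^ 4) *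
      Real.exp ((1 - p) * t - p / (2 * σ ^ 2) * t ^ 2)) μ]

/-- The `(2,2)` entry of the matrix `K_β(μ,σ)`. -/
theorem K_entry_22 (μ σ β : ℝ) (hσ : 0 < σ) (hβ : 0 ≤ β) :
    (∫ x in Ioi (0 : ℝ), scoreU2 μ σ x ^ 2 * lognormalPdf μ σ x ^ (1 + 2 * β)) -
        (∫ x in Ioi (0 : ℝ), scoreU2 μ σ x * lognormalPdf μ σ x ^ (1 + β)) ^ 2 =
      (Lstar β μ σ / σ) *
          (16 * β ^ 4 * σ ^ 4 / (1 + 2 * β) ^ 2 + 24 * σ ^ 2 * β ^ 2 / (1 + 2 * β) +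
            4 * β ^ 2 * (1 - 2 * σ ^ 2) + 2) -
        Lstarstar β μ σ * (β ^ 2 * (β * σ ^ 2 - β - 1) ^ 2 / (1 + β) ^ 2) := by
  have hK : (0 : ℝ) < 1 + 2 * β := by linarith
  have hJ : (0 : ℝ) < 1 + β := by linarith
  have ha1 : (0 : ℝ) < (1 + 2 * β) / (2 * σ ^ 2) := by positivity
  have ha2 : (0 : ℝ) < (1 + β) / (2 * σ ^ 2) := by positivity
  have hσ6 : σ ^ 6 ≠ 0 := by positivity
  have hA : ∫ x in Ioi (0 : ℝ), scoreU2 μ σ x ^ 2 * lognormalPdf μ σ x ^ (1 + 2 * β)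
      = ∫ x in Ioi (0 : ℝ), (1 / σ ^ 2 + 0 * (Real.log x - μ) +
          (-2 / σ ^ 4) * (Real.log x - μ) ^ 2 + 0 * (Real.log x - μ) ^ 3 +
          (1 / σ ^ 6) * (Real.log x - μ) ^ 4) * lognormalPdf μ σ x ^ (1 + 2 * β) := by
    refine setIntegral_congr_fun measurableSet_Ioi fun x _ => ?_
    simp only [scoreU2]
    congr 1
    field_simp
    ring
  have hB : ∫ x in Ioi (0 : ℝ), scoreU2 μ σ x * lognormalPdf μ σ x ^ (1 + β)
      = ∫ x in Ioi (0 : ℝ), (-1 / σ + 0 * (Real.log x - μ) +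
          (1 / σ ^ 3) * (Real.log x - μ) ^ 2 + 0 * (Real.log x - μ) ^ 3 +
          0 * (Real.log x - μ) ^ 4) * lognormalPdf μ σ x ^ (1 + β) := by
    refine setIntegral_congr_fun measurableSet_Ioi fun x _ => ?_
    simp only [scoreU2]
    congr 1
    field_simp
    ring
  rw [hA, hB, lognormal_int μ σ (1 + 2 * β) (1 / σ ^ 2) 0 (-2 / σ ^ 4) 0 (1 / σ ^ 6) hσ hK,
    lognormal_int μ σ (1 + β) (-1 / σ) 0 (1 / σ ^ 3) 0 0 hσ hJ,
    gauss_shift ((1 + 2 * β) / (2 * σ ^ 2)) (1 - (1 + 2 * β)) _ _ _ _ _ ha1,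
    gauss_shift ((1 + β) / (2 * σ ^ 2)) (1 - (1 + β)) _ _ _ _ _ ha2]
  have h2π : (0:ℝ) < 2 * π := Real.two_pi_pos
  have hc0 : (0:ℝ) < σ * Real.sqrt (2 * π) := by positivity
  have hs2 : Real.sqrt 2 ≠ 0 := by positivity
  have hsπ : Real.sqrt π ≠ 0 := by
    have := Real.pi_pos; positivity
  have hsK : Real.sqrt (1 + 2 * β) ≠ 0 := by positivity
  have hσ' : σ ≠ 0 := hσ.ne'
  have hσ2β : σ ^ (2 * β) ≠ 0 := (Real.rpow_pos_of_pos hσ _).ne'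
  have h2πβ : (2 * π) ^ β ≠ 0 := (Real.rpow_pos_of_pos h2π _).ne'
  have hπ : π ≠ 0 := Real.pi_pos.ne'
  congr 1
  · -- first term
    rw [show rexp ((1 - (1 + 2 * β)) * μ) = rexp (-2 * β * μ) from by congr 1; ring]
    rw [show rexp ((1 - (1 + 2 * β)) ^ 2 / (4 * ((1 + 2 * β) / (2 * σ ^ 2))))
        = rexp (2 * β ^ 2 * σ ^ 2 / (1 + 2 * β)) from by congr 1; field_simp; ring]
    rw [show (σ * Real.sqrt (2 * π)) ^ (1 + 2 * β)
        = σ * σ ^ (2 * β) * (Real.sqrt 2 * Real.sqrt π * (2 * π) ^ β) from by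
      rw [Real.mul_rpow hσ.le (Real.sqrt_nonneg _), Real.rpow_add hσ, Real.rpow_one,
        Real.sqrt_eq_rpow (2 * π), ← Real.rpow_mul Real.two_pi_pos.le,
        show (1 / 2 : ℝ) * (1 + 2 * β) = 1 / 2 + β from by ring,
        Real.rpow_add Real.two_pi_pos, ← Real.sqrt_eq_rpow,
        Real.sqrt_mul (by norm_num : (0:ℝ) ≤ 2) π]]
    rw [show Real.sqrt π / Real.sqrt ((1 + 2 * β) / (2 * σ ^ 2))
        = Real.sqrt 2 * Real.sqrt π * σ / Real.sqrt (1 + 2 * β) from by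
      rw [Real.sqrt_div hK.le, Real.sqrt_mul (by norm_num : (0:ℝ) ≤ 2) (σ ^ 2),
        Real.sqrt_sq hσ.le]
      field_simp]
    simp only [Lstar]
    rw [Real.exp_add, show σ ^ (2 * β + 1) = σ ^ (2 * β) * σ from by
        rw [Real.rpow_add hσ, Real.rpow_one],
      show (1 + 2 * β) ^ ((5:ℝ) / 2) = (1 + 2 * β) ^ 2 * Real.sqrt (1 + 2 * β) from by
        rw [Real.sqrt_eq_rpow, ← Real.rpow_natCast (1 + 2 * β) 2, ← Real.rpow_add hK]
        norm_num]
    field_simp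
    ring
  · -- second term
    rw [show (rexp ((1 - (1 + β)) * μ) / (σ * √(2 * π)) ^ (1 + β) *
          (rexp ((1 - (1 + β)) ^ 2 / (4 * ((1 + β) / (2 * σ ^ 2)))) *
            (√π / √((1 + β) / (2 * σ ^ 2))) *
            (-1 / σ + 0 * ((1 - (1 + β)) / (2 * ((1 + β) / (2 * σ ^ 2)))) +
                      1 / σ ^ 3 * ((1 - (1 + β)) / (2 * ((1 + β) / (2 * σ ^ 2)))) ^ 2 +
                    0 * ((1 - (1 + β)) / (2 * ((1 + β) / (2 * σ ^ 2)))) ^ 3 +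
                  0 * ((1 - (1 + β)) / (2 * ((1 + β) / (2 * σ ^ 2)))) ^ 4 +
                (1 / σ ^ 3 + 3 * 0 * ((1 - (1 + β)) / (2 * ((1 + β) / (2 * σ ^ 2)))) +
                    6 * 0 * ((1 - (1 + β)) / (2 * ((1 + β) / (2 * σ ^ 2)))) ^ 2) /
                  (2 * ((1 + β) / (2 * σ ^ 2))) +
              3 * 0 / (4 * ((1 + β) / (2 * σ ^ 2)) ^ 2)))) ^ 2
        = rexp ((1 - (1 + β)) * μ) * rexp ((1 - (1 + β)) * μ) *
            (rexp ((1 - (1 + β)) ^ 2 / (4 * ((1 + β) / (2 * σ ^ 2)))) *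
              rexp ((1 - (1 + β)) ^ 2 / (4 * ((1 + β) / (2 * σ ^ 2))))) *
            ((√π * √π) / (√((1 + β) / (2 * σ ^ 2)) * √((1 + β) / (2 * σ ^ 2)))) *
            (-1 / σ + 0 * ((1 - (1 + β)) / (2 * ((1 + β) / (2 * σ ^ 2)))) +
                      1 / σ ^ 3 * ((1 - (1 + β)) / (2 * ((1 + β) / (2 * σ ^ 2)))) ^ 2 +
                    0 * ((1 - (1 + β)) / (2 * ((1 + β) / (2 * σ ^ 2)))) ^ 3 +
                  0 * ((1 - (1 + β)) / (2 * ((1 + β) / (2 * σ ^ 2)))) ^ 4 +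
                (1 / σ ^ 3 + 3 * 0 * ((1 - (1 + β)) / (2 * ((1 + β) / (2 * σ ^ 2)))) +
                    6 * 0 * ((1 - (1 + β)) / (2 * ((1 + β) / (2 * σ ^ 2)))) ^ 2) /
                  (2 * ((1 + β) / (2 * σ ^ 2))) +
              3 * 0 / (4 * ((1 + β) / (2 * σ ^ 2)) ^ 2)) ^ 2 /
            ((σ * √(2 * π)) ^ (1 + β) * (σ * √(2 * π)) ^ (1 + β)) from by ring]
    rw [show rexp ((1 - (1 + β)) * μ) * rexp ((1 - (1 + β)) * μ) *
          (rexp ((1 - (1 + β)) ^ 2 / (4 * ((1 + β) / (2 * σ ^ 2)))) *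
            rexp ((1 - (1 + β)) ^ 2 / (4 * ((1 + β) / (2 * σ ^ 2)))))
        = rexp (-2 * β * μ + β ^ 2 * σ ^ 2 / (1 + β)) from by
      rw [← Real.exp_add, ← Real.exp_add, ← Real.exp_add]
      congr 1
      field_simp
      ring]
    rw [Real.mul_self_sqrt Real.pi_pos.le, Real.mul_self_sqrt ha2.le]
    rw [show (σ * √(2 * π)) ^ (1 + β) * (σ * √(2 * π)) ^ (1 + β)
        = σ ^ 2 * σ ^ (2 * β) * (2 * π * (2 * π) ^ β) from by
      rw [← Real.rpow_add hc0, show (1 : ℝ) + β + (1 + β) = 2 + 2 * β from by ring,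
        Real.mul_rpow hσ.le (Real.sqrt_nonneg _), Real.rpow_add hσ, Real.rpow_two,
        Real.sqrt_eq_rpow (2 * π), ← Real.rpow_mul Real.two_pi_pos.le,
        show (1 / 2 : ℝ) * (2 + 2 * β) = 1 + β from by ring,
        Real.rpow_add Real.two_pi_pos, Real.rpow_one]]
    simp only [Lstarstar]
    rw [show σ ^ (2 * β + 2) = σ ^ (2 * β) * σ ^ 2 from by
      rw [Real.rpow_add hσ, Real.rpow_two]]
    field_simp
    ring
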